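/- Let N > 2 be an integer, let T = {x ∈ (ℤ/Nℤ) × (ℤ/Nℤ) : addOrderOf x = N}, and let s be any setoid (equivalence relation) on T such that a ≈ b if and only if a = b or a = −b (as elements of (ℤ/Nℤ)²). Then 2 · (∏_{p ∈ N.primeFactors} p) · Nat.card (Quotient s) = N · φ(N) · ∏_{p ∈ N.primeFactors} (p + 1). Equivalently, the number of elements of order N in (ℤ/Nℤ)² taken up to sign equals N·φ(N)·∏_{p | N}(1 + 1/p) / 2. -/

import Mathlib

-- kernel of multiplication by d in ZMod n has d elements
lemma ker_nsmul_card (n d : ℕ) (hn : n ≠ 0) (hd : d ∣ n) :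
    Nat.card {a : ZMod n // d • a = 0} = d := by
  haveI : NeZero n := ⟨hn⟩
  have hd0 : d ≠ 0 := fun h => hn (by simpa [h] using hd)
  set c : ZMod n := ((n / d : ℕ) : ZMod n) with hc
  have hdc : d • c = 0 := by
    rw [hc, nsmul_eq_mul, ← Nat.cast_mul, Nat.mul_div_cancel' hd, ZMod.natCast_self]
  have key : ∀ a : ZMod n, a ∈ AddSubgroup.zmultiples c ↔ d • a = 0 := by
    intro a
    constructor
    · rintro ⟨z, rfl⟩
      rw [smul_comm, hdc, smul_zero]
    · intro h
      have hav : ((a.val : ℕ) : ZMod n) = a := ZMod.natCast_rightInverse a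
      have h2 : ((d * a.val : ℕ) : ZMod n) = 0 := by
        rw [Nat.cast_mul, hav, ← nsmul_eq_mul]
        exact h
      have h3 : n ∣ d * a.val := (ZMod.natCast_eq_zero_iff _ _).mp h2
      have h4 : (n / d) ∣ a.val := by
        rcases h3 with ⟨t, ht⟩
        refine ⟨t, ?_⟩
        have : d * a.val = d * ((n/d) * t) := by
          rw [ht, ← Nat.mul_assoc, Nat.mul_div_cancel' hd]
        exact Nat.eq_of_mul_eq_mul_left (Nat.pos_of_ne_zero hd0) this
      rcases h4 with ⟨t, ht⟩
      refine ⟨(t : ℤ), ?_⟩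
      show (t : ℤ) • c = a
      rw [natCast_zsmul, nsmul_eq_mul, hc, ← Nat.cast_mul, mul_comm t, ← ht, hav]
  have e : {a : ZMod n // d • a = 0} ≃ (AddSubgroup.zmultiples c) :=
    (Equiv.subtypeEquivRight key).symm
  rw [Nat.card_congr e, Nat.card_zmultiples, hc, ZMod.addOrderOf_coe _ hn,
    Nat.gcd_eq_right (Nat.div_dvd_of_dvd hd), Nat.div_div_self hd hn]

lemma ker_nsmul_card_pair (n d : ℕ) (hn : n ≠ 0) (hd : d ∣ n) :
    Nat.card {x : ZMod n × ZMod n // d • x = 0} = d ^ 2 := by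
  have e1 : {x : ZMod n × ZMod n // d • x = 0} ≃
      {x : ZMod n × ZMod n // d • x.1 = 0 ∧ d • x.2 = 0} :=
    Equiv.subtypeEquivRight (fun x => by simp [Prod.ext_iff])
  have e2 : {x : ZMod n × ZMod n // d • x.1 = 0 ∧ d • x.2 = 0} ≃
      {a : ZMod n // d • a = 0} × {a : ZMod n // d • a = 0} :=
    Equiv.subtypeProdEquivProd (p := fun a : ZMod n => d • a = 0)
      (q := fun a : ZMod n => d • a = 0)
  rw [Nat.card_congr (e1.trans e2), Nat.card_prod, ker_nsmul_card n d hn hd, sq]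

lemma order_dvd_self (n : ℕ) (x : ZMod n × ZMod n) : addOrderOf x ∣ n := by
  apply addOrderOf_dvd_of_nsmul_eq_zero
  have h1 : n • x.1 = 0 := by
    rw [nsmul_eq_mul, ZMod.natCast_self, zero_mul]
  have h2 : n • x.2 = 0 := by
    rw [nsmul_eq_mul, ZMod.natCast_self, zero_mul]
  ext <;> simp [h1, h2]

lemma g_prime_pow (p k : ℕ) (hp : p.Prime) (hk : 0 < k) :
    Nat.card {x : ZMod (p ^ k) × ZMod (p ^ k) // addOrderOf x = p ^ k} =
      (p ^ k) ^ 2 - (p ^ (k - 1)) ^ 2 := by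
  classical
  have hq : (p ^ k : ℕ) ≠ 0 := pow_ne_zero _ hp.pos.ne'
  haveI : NeZero (p ^ k) := ⟨hq⟩
  have key : ∀ x : ZMod (p ^ k) × ZMod (p ^ k),
      ¬ (addOrderOf x = p ^ k) ↔ p ^ (k - 1) • x = 0 := by
    intro x
    constructor
    · intro h
      rcases (Nat.dvd_prime_pow hp).mp (order_dvd_self _ x) with ⟨j, hj, hje⟩
      have hjne : j ≠ k := fun e => h (by rw [hje, e])
      have hjk : j ≤ k - 1 := by omega
      exact addOrderOf_dvd_iff_nsmul_eq_zero.mp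
        (by rw [hje]; exact pow_dvd_pow p hjk)
    · intro h
      intro hc
      have : addOrderOf x ∣ p ^ (k - 1) := addOrderOf_dvd_of_nsmul_eq_zero h
      rw [hc] at this
      have := Nat.le_of_dvd (pow_pos hp.pos _) this
      have := Nat.pow_lt_pow_right hp.one_lt (Nat.sub_lt hk one_pos)
      omega
  have ecomp : {x : ZMod (p ^ k) × ZMod (p ^ k) // ¬ addOrderOf x = p ^ k} ≃
      {x : ZMod (p ^ k) × ZMod (p ^ k) // p ^ (k - 1) • x = 0} :=
    Equiv.subtypeEquivRight key
  have hcompl : Nat.card {x : ZMod (p ^ k) × ZMod (p ^ k) // ¬ addOrderOf x = p ^ k} =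
      (p ^ (k - 1)) ^ 2 := by
    rw [Nat.card_congr ecomp]
    exact ker_nsmul_card_pair _ _ hq (pow_dvd_pow p (Nat.sub_le k 1))
  have htot : Nat.card (ZMod (p ^ k) × ZMod (p ^ k)) = (p ^ k) ^ 2 := by
    rw [Nat.card_prod, Nat.card_zmod, sq]
  rw [Nat.card_eq_fintype_card] at htot hcompl ⊢
  rw [Fintype.card_subtype_compl] at hcompl
  have hle : Fintype.card {x : ZMod (p ^ k) × ZMod (p ^ k) // addOrderOf x = p ^ k} ≤
      Fintype.card (ZMod (p ^ k) × ZMod (p ^ k)) := Fintype.card_subtype_le _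
  have hple : (p ^ (k - 1)) ^ 2 ≤ (p ^ k) ^ 2 :=
    Nat.pow_le_pow_left (Nat.pow_le_pow_right hp.pos (Nat.sub_le k 1)) 2
  omega

lemma g_mul (m n : ℕ) (hm : 0 < m) (hn : 0 < n) (h : Nat.Coprime m n) :
    Nat.card {x : ZMod (m * n) × ZMod (m * n) // addOrderOf x = m * n} =
      Nat.card {x : ZMod m × ZMod m // addOrderOf x = m} *
      Nat.card {x : ZMod n × ZMod n // addOrderOf x = n} := by
  have e : ZMod (m * n) ≃+ ZMod m × ZMod n := (ZMod.chineseRemainder h).toAddEquiv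
  have E : (ZMod (m * n) × ZMod (m * n)) ≃+ (ZMod m × ZMod m) × (ZMod n × ZMod n) :=
    (AddEquiv.prodCongr e e).trans (AddEquiv.prodProdProdComm _ _ _ _)
  have hE : ∀ x, addOrderOf (E x) = addOrderOf x := fun x =>
    addOrderOf_injective E.toAddMonoidHom E.injective x
  have e1 : {x : ZMod (m * n) × ZMod (m * n) // addOrderOf x = m * n} ≃
      {y : (ZMod m × ZMod m) × (ZMod n × ZMod n) // addOrderOf y = m * n} :=
    E.toEquiv.subtypeEquiv (fun x => by rw [show addOrderOf (E.toEquiv x) = addOrderOf x from hE x])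
  have key : ∀ y : (ZMod m × ZMod m) × (ZMod n × ZMod n),
      addOrderOf y = m * n ↔ addOrderOf y.1 = m ∧ addOrderOf y.2 = n := by
    intro y
    rw [Prod.addOrderOf]
    obtain ⟨s, hs⟩ := order_dvd_self m y.1
    obtain ⟨t, ht⟩ := order_dvd_self n y.2
    constructor
    · intro heq
      have hco : Nat.Coprime (addOrderOf y.1) (addOrderOf y.2) :=
        Nat.Coprime.coprime_dvd_left ⟨s, hs⟩ (Nat.Coprime.coprime_dvd_right ⟨t, ht⟩ h)
      rw [Nat.Coprime.lcm_eq_mul hco] at heq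
      have ha0 : 0 < addOrderOf y.1 := Nat.pos_of_dvd_of_pos ⟨s, hs⟩ hm
      have hb0 : 0 < addOrderOf y.2 := Nat.pos_of_dvd_of_pos ⟨t, ht⟩ hn
      have hst : s * t = 1 := by
        have h2 : (addOrderOf y.1 * addOrderOf y.2) * (s * t) =
            (addOrderOf y.1 * addOrderOf y.2) * 1 := by
          rw [mul_one]
          calc addOrderOf y.1 * addOrderOf y.2 * (s * t)
              = (addOrderOf y.1 * s) * (addOrderOf y.2 * t) := by ring
            _ = m * n := by rw [← hs, ← ht]
            _ = addOrderOf y.1 * addOrderOf y.2 := heq.symm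
        exact Nat.eq_of_mul_eq_mul_left (Nat.mul_pos ha0 hb0) h2
      have hs1 : s = 1 := Nat.eq_one_of_mul_eq_one_right hst
      have ht1 : t = 1 := Nat.eq_one_of_mul_eq_one_left hst
      constructor
      · rw [hs1, mul_one] at hs; exact hs.symm
      · rw [ht1, mul_one] at ht; exact ht.symm
    · rintro ⟨h1, h2⟩
      rw [h1, h2, Nat.Coprime.lcm_eq_mul h]
  have e2 : {y : (ZMod m × ZMod m) × (ZMod n × ZMod n) // addOrderOf y = m * n} ≃
      {x : ZMod m × ZMod m // addOrderOf x = m} ×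
      {x : ZMod n × ZMod n // addOrderOf x = n} :=
    (Equiv.subtypeEquivRight key).trans
      (Equiv.subtypeProdEquivProd (p := fun x : ZMod m × ZMod m => addOrderOf x = m)
        (q := fun x : ZMod n × ZMod n => addOrderOf x = n))
  rw [Nat.card_congr (e1.trans e2), Nat.card_prod]

lemma pow_sub_key (a p : ℕ) (hp : 1 ≤ p) :
    ((a * p) ^ 2 - a ^ 2) * p = (a * p) * (a * (p - 1)) * (p + 1) := by
  obtain ⟨q, rfl⟩ : ∃ q, p = q + 1 := ⟨p - 1, by omega⟩
  have h1 : (a * (q + 1)) ^ 2 = a ^ 2 * (q * q + 2 * q) + a ^ 2 := by ring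
  rw [h1, Nat.add_sub_cancel, Nat.add_sub_cancel]
  ring

lemma g_identity (n : ℕ) (hn : 0 < n) :
    Nat.card {x : ZMod n × ZMod n // addOrderOf x = n} * ∏ p ∈ n.primeFactors, p
      = n * n.totient * ∏ p ∈ n.primeFactors, (p + 1) := by
  induction n using Nat.recOnPosPrimePosCoprime with
  | prime_pow p k hpp hk =>
    obtain ⟨k', rfl⟩ : ∃ k', k = k' + 1 := ⟨k - 1, by omega⟩
    rw [g_prime_pow p (k' + 1) hpp (by omega),
      Nat.totient_prime_pow hpp (by omega),
      Nat.primeFactors_prime_pow (by omega) hpp,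
      Finset.prod_singleton, Finset.prod_singleton, Nat.add_sub_cancel]
    rw [pow_succ]
    exact pow_sub_key (p ^ k') p hpp.one_lt.le
  | zero => exact absurd hn (by omega)
  | one =>
    haveI : Unique {x : ZMod 1 × ZMod 1 // addOrderOf x = 1} :=
      { default := ⟨0, addOrderOf_zero⟩,
        uniq := fun a => Subtype.ext (Subsingleton.elim _ _) }
    simp [Nat.card_unique]
  | coprime a b ha hb hab iha ihb =>
    have ha0 : (0:ℕ) < a := by omega
    have hb0 : (0:ℕ) < b := by omega
    rw [g_mul a b ha0 hb0 hab, Nat.totient_mul hab,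
      hab.primeFactors_mul,
      Finset.prod_union hab.disjoint_primeFactors,
      Finset.prod_union hab.disjoint_primeFactors]
    have h1 := iha ha0
    have h2 := ihb hb0
    calc Nat.card {x : ZMod a × ZMod a // addOrderOf x = a} *
          Nat.card {x : ZMod b × ZMod b // addOrderOf x = b} *
          ((∏ p ∈ a.primeFactors, p) * ∏ p ∈ b.primeFactors, p)
        = (Nat.card {x : ZMod a × ZMod a // addOrderOf x = a} * ∏ p ∈ a.primeFactors, p) *
          (Nat.card {x : ZMod b × ZMod b // addOrderOf x = b} * ∏ p ∈ b.primeFactors, p) := by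
          ring
      _ = (a * a.totient * ∏ p ∈ a.primeFactors, (p + 1)) *
          (b * b.totient * ∏ p ∈ b.primeFactors, (p + 1)) := by rw [h1, h2]
      _ = a * b * (a.totient * b.totient) *
          ((∏ p ∈ a.primeFactors, (p + 1)) * ∏ p ∈ b.primeFactors, (p + 1)) := by ring

theorem count_order_N_up_to_sign (N : ℕ) (hN : 2 < N)
    (s : Setoid {x : ZMod N × ZMod N // addOrderOf x = N})
    (hs : ∀ a b, s.r a b ↔
      ((a : ZMod N × ZMod N) = b ∨ (a : ZMod N × ZMod N) = -(b : ZMod N × ZMod N))) :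
    2 * (∏ p ∈ N.primeFactors, p) * Nat.card (Quotient s) =
      N * N.totient * ∏ p ∈ N.primeFactors, (p + 1) := by
  classical
  haveI : NeZero N := ⟨by omega⟩
  have fiber2 : ∀ q : Quotient s,
      Nat.card {x : {x : ZMod N × ZMod N // addOrderOf x = N} // Quotient.mk s x = q} = 2 := by
    intro q
    set b : {x : ZMod N × ZMod N // addOrderOf x = N} := q.out with hb
    have hbne : (b : ZMod N × ZMod N) ≠ -(b : ZMod N × ZMod N) := by
      intro hcon
      have h2 : (2 : ℕ) • (b : ZMod N × ZMod N) = 0 := by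
        rw [two_nsmul]
        nth_rewrite 1 [hcon]
        exact neg_add_cancel _
      have := Nat.le_of_dvd (by norm_num) (b.2 ▸ addOrderOf_dvd_of_nsmul_eq_zero h2)
      omega
    set b' : {x : ZMod N × ZMod N // addOrderOf x = N} :=
      ⟨-(b : ZMod N × ZMod N), by rw [addOrderOf_neg]; exact b.2⟩ with hb'
    have hbb' : b ≠ b' := fun e => hbne (congrArg Subtype.val e)
    have hiff : ∀ x : {x : ZMod N × ZMod N // addOrderOf x = N},
        Quotient.mk s x = q ↔ (x = b ∨ x = b') := by
      intro x
      rw [← q.out_eq, Quotient.eq, ← hb]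
      constructor
      · intro h
        rcases (hs x b).mp h with h | h
        · exact Or.inl (Subtype.ext h)
        · exact Or.inr (Subtype.ext h)
      · rintro (rfl | rfl)
        · exact (hs _ _).mpr (Or.inl rfl)
        · exact (hs _ _).mpr (Or.inr rfl)
    have e : {x : {x : ZMod N × ZMod N // addOrderOf x = N} // Quotient.mk s x = q} ≃
        ({b, b'} : Set {x : ZMod N × ZMod N // addOrderOf x = N}) :=
      Equiv.subtypeEquivRight (fun x => by
        rw [hiff x]; simp [Set.mem_insert_iff, Set.mem_singleton_iff])
    rw [Nat.card_congr e, Nat.card_coe_set_eq, Set.ncard_pair hbb']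
  have hsplit : Nat.card {x : ZMod N × ZMod N // addOrderOf x = N} =
      2 * Nat.card (Quotient s) := by
    rw [Nat.card_eq_fintype_card, Nat.card_eq_fintype_card (α := Quotient s)]
    rw [Fintype.card_congr (Equiv.sigmaFiberEquiv (Quotient.mk s)).symm]
    rw [Fintype.card_sigma]
    have h2 : ∀ q : Quotient s,
        Fintype.card {x : {x : ZMod N × ZMod N // addOrderOf x = N} // Quotient.mk s x = q}
          = 2 := by
      intro q
      rw [← Nat.card_eq_fintype_card]
      exact fiber2 q
    simp only [h2, Finset.sum_const, smul_eq_mul, Finset.card_univ]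
    ring
  have hg := g_identity N (by omega)
  calc 2 * (∏ p ∈ N.primeFactors, p) * Nat.card (Quotient s)
      = (2 * Nat.card (Quotient s)) * ∏ p ∈ N.primeFactors, p := by ring
    _ = Nat.card {x : ZMod N × ZMod N // addOrderOf x = N} * ∏ p ∈ N.primeFactors, p := by
        rw [hsplit]
    _ = N * N.totient * ∏ p ∈ N.primeFactors, (p + 1) := hg
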